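/- Every threefold triple system TS_3(5) on a 5-element point set is the complete design consisting of all ten 3-element subsets of the point set, each occurring exactly once. -/

import Mathlib

open Finset

/-- `IsPBD B lam K`: the indexed family of blocks `B` (a multiset of subsets of the
point set `V`, one block per index) is a pairwise balanced design `PBD_lam(|V|, K)`:
every block has size in `K`, and every pair of distinct points lies in exactly `lam`
blocks (counted with multiplicity). -/
def IsPBD {V : Type*} [DecidableEq V] {ι : Type*} [Fintype ι]
    (B : ι → Finset V) (lam : ℕ) (K : Set ℕ) : Prop :=
  (∀ i, (B i).card ∈ K) ∧
  (∀ p : Finset V, p.card = 2 → (Finset.univ.filter (fun i => p ⊆ B i)).card = lam)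

/-- The generalized incidence matrix `N₂`: rows indexed by 2-element subsets of the
point set, columns indexed by the blocks (with multiplicity); entry is 1 if the pair
is contained in the block, and 0 otherwise. -/
def N2 {V : Type*} [DecidableEq V] {ι : Type*} (F : Type*) [Zero F] [One F]
    (B : ι → Finset V) : Matrix {P : Finset V // P.card = 2} ι F :=
  Matrix.of fun P i => if (P : Finset V) ⊆ B i then 1 else 0

/-- The core lemma on `Fin 5`: a multiplicity function on triples whose three values
over every pair sum to `3` is constantly `1` on triples. -/
lemma fin5_multiplicity_one (m : Finset (Fin 5) → ℕ)
    (key : ∀ q : Finset (Fin 5), q.card = 2 →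
      ∑ T ∈ (univ.powersetCard 3).filter (fun T => q ⊆ T), m T = 3) :
    ∀ S : Finset (Fin 5), S.card = 3 → m S = 1 := by
  have e01 : m {0,1,2} + m {0,1,3} + m {0,1,4} = 3 := by
    have h := key {0,1} (by decide)
    rw [show ((univ.powersetCard 3).filter (fun T => ({0,1} : Finset (Fin 5)) ⊆ T)) =
        ({{0,1,2}, {0,1,3}, {0,1,4}} : Finset (Finset (Fin 5))) from by decide,
      Finset.sum_insert (by decide), Finset.sum_insert (by decide),
      Finset.sum_singleton, ← add_assoc] at h
    exact h
  have e02 : m {0,1,2} + m {0,2,3} + m {0,2,4} = 3 := by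
    have h := key {0,2} (by decide)
    rw [show ((univ.powersetCard 3).filter (fun T => ({0,2} : Finset (Fin 5)) ⊆ T)) =
        ({{0,1,2}, {0,2,3}, {0,2,4}} : Finset (Finset (Fin 5))) from by decide,
      Finset.sum_insert (by decide), Finset.sum_insert (by decide),
      Finset.sum_singleton, ← add_assoc] at h
    exact h
  have e03 : m {0,1,3} + m {0,2,3} + m {0,3,4} = 3 := by
    have h := key {0,3} (by decide)
    rw [show ((univ.powersetCard 3).filter (fun T => ({0,3} : Finset (Fin 5)) ⊆ T)) =
        ({{0,1,3}, {0,2,3}, {0,3,4}} : Finset (Finset (Fin 5))) from by decide,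
      Finset.sum_insert (by decide), Finset.sum_insert (by decide),
      Finset.sum_singleton, ← add_assoc] at h
    exact h
  have e04 : m {0,1,4} + m {0,2,4} + m {0,3,4} = 3 := by
    have h := key {0,4} (by decide)
    rw [show ((univ.powersetCard 3).filter (fun T => ({0,4} : Finset (Fin 5)) ⊆ T)) =
        ({{0,1,4}, {0,2,4}, {0,3,4}} : Finset (Finset (Fin 5))) from by decide,
      Finset.sum_insert (by decide), Finset.sum_insert (by decide),
      Finset.sum_singleton, ← add_assoc] at h
    exact h
  have e12 : m {0,1,2} + m {1,2,3} + m {1,2,4} = 3 := by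
    have h := key {1,2} (by decide)
    rw [show ((univ.powersetCard 3).filter (fun T => ({1,2} : Finset (Fin 5)) ⊆ T)) =
        ({{0,1,2}, {1,2,3}, {1,2,4}} : Finset (Finset (Fin 5))) from by decide,
      Finset.sum_insert (by decide), Finset.sum_insert (by decide),
      Finset.sum_singleton, ← add_assoc] at h
    exact h
  have e13 : m {0,1,3} + m {1,2,3} + m {1,3,4} = 3 := by
    have h := key {1,3} (by decide)
    rw [show ((univ.powersetCard 3).filter (fun T => ({1,3} : Finset (Fin 5)) ⊆ T)) =
        ({{0,1,3}, {1,2,3}, {1,3,4}} : Finset (Finset (Fin 5))) from by decide,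
      Finset.sum_insert (by decide), Finset.sum_insert (by decide),
      Finset.sum_singleton, ← add_assoc] at h
    exact h
  have e14 : m {0,1,4} + m {1,2,4} + m {1,3,4} = 3 := by
    have h := key {1,4} (by decide)
    rw [show ((univ.powersetCard 3).filter (fun T => ({1,4} : Finset (Fin 5)) ⊆ T)) =
        ({{0,1,4}, {1,2,4}, {1,3,4}} : Finset (Finset (Fin 5))) from by decide,
      Finset.sum_insert (by decide), Finset.sum_insert (by decide),
      Finset.sum_singleton, ← add_assoc] at h
    exact h
  have e23 : m {0,2,3} + m {1,2,3} + m {2,3,4} = 3 := by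
    have h := key {2,3} (by decide)
    rw [show ((univ.powersetCard 3).filter (fun T => ({2,3} : Finset (Fin 5)) ⊆ T)) =
        ({{0,2,3}, {1,2,3}, {2,3,4}} : Finset (Finset (Fin 5))) from by decide,
      Finset.sum_insert (by decide), Finset.sum_insert (by decide),
      Finset.sum_singleton, ← add_assoc] at h
    exact h
  have e24 : m {0,2,4} + m {1,2,4} + m {2,3,4} = 3 := by
    have h := key {2,4} (by decide)
    rw [show ((univ.powersetCard 3).filter (fun T => ({2,4} : Finset (Fin 5)) ⊆ T)) =
        ({{0,2,4}, {1,2,4}, {2,3,4}} : Finset (Finset (Fin 5))) from by decide,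
      Finset.sum_insert (by decide), Finset.sum_insert (by decide),
      Finset.sum_singleton, ← add_assoc] at h
    exact h
  have e34 : m {0,3,4} + m {1,3,4} + m {2,3,4} = 3 := by
    have h := key {3,4} (by decide)
    rw [show ((univ.powersetCard 3).filter (fun T => ({3,4} : Finset (Fin 5)) ⊆ T)) =
        ({{0,3,4}, {1,3,4}, {2,3,4}} : Finset (Finset (Fin 5))) from by decide,
      Finset.sum_insert (by decide), Finset.sum_insert (by decide),
      Finset.sum_singleton, ← add_assoc] at h
    exact h
  intro S hS
  have h10 : S = {0,1,2} ∨ S = {0,1,3} ∨ S = {0,1,4} ∨ S = {0,2,3} ∨ S = {0,2,4} ∨ S = {0,3,4} ∨ S = {1,2,3} ∨ S = {1,2,4} ∨ S = {1,3,4} ∨ S = {2,3,4} := by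
    revert hS; revert S; decide
  rcases h10 with rfl|rfl|rfl|rfl|rfl|rfl|rfl|rfl|rfl|rfl <;> omega

/-- Every threefold triple system `TS_3(5)` on a 5-element point set is the complete
design: every 3-element subset of the point set occurs exactly once as a block. -/
theorem ts3_five_is_complete_design {V ι : Type*} [Fintype V] [DecidableEq V]
    [Fintype ι] (hV : Fintype.card V = 5) (B : ι → Finset V) (hB : IsPBD B 3 {3}) :
    ∀ T : Finset V, T.card = 3 → (Finset.univ.filter (fun i => B i = T)).card = 1 := by
  obtain ⟨hcard, hpair⟩ := hB
  have e : V ≃ Fin 5 := Fintype.equivFinOfCardEq hV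
  set f : V ↪ Fin 5 := e.toEmbedding with hf
  set m : Finset (Fin 5) → ℕ :=
    fun T => (Finset.univ.filter (fun i => (B i).map f = T)).card with hm
  have key : ∀ q : Finset (Fin 5), q.card = 2 →
      ∑ T ∈ (univ.powersetCard 3).filter (fun T => q ⊆ T), m T = 3 := by
    intro q hq
    set p : Finset V := q.map e.symm.toEmbedding with hp
    have hpq : p.map f = q := by
      simp [hp, hf, Finset.map_map]
    have hpc : p.card = 2 := by simp [hp, hq]
    have hiff : ∀ i, p ⊆ B i ↔ q ⊆ (B i).map f := by
      intro i
      rw [← hpq, Finset.map_subset_map]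
    have h3 := hpair p hpc
    have hsplit := Finset.card_eq_sum_card_fiberwise
      (f := fun i => (B i).map f)
      (s := Finset.univ.filter (fun i => p ⊆ B i))
      (t := (univ.powersetCard 3).filter (fun T => q ⊆ T))
      (by
        intro i hi
        rw [Finset.mem_coe, Finset.mem_filter] at hi ⊢
        refine ⟨Finset.mem_powersetCard.2 ⟨Finset.subset_univ _, ?_⟩, (hiff i).1 hi.2⟩
        rw [Finset.card_map]
        exact hcard i)
    rw [h3] at hsplit
    refine Eq.trans (Finset.sum_congr rfl fun T hT => ?_) hsplit.symm
    rw [Finset.mem_filter] at hT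
    simp only [hm]
    congr 1
    rw [Finset.filter_filter]
    ext i
    simp only [Finset.mem_filter, Finset.mem_univ, true_and]
    constructor
    · intro h; exact ⟨(hiff i).2 (h ▸ hT.2), h⟩
    · intro h; exact h.2
  intro T hT
  have hgoal : (Finset.univ.filter (fun i => B i = T)).card = m (T.map f) := by
    simp only [hm]
    congr 1
    ext i
    simp only [Finset.mem_filter, Finset.mem_univ, true_and]
    constructor
    · intro h; rw [h]
    · intro h
      exact Finset.map_injective f h
  rw [hgoal]
  exact fin5_multiplicity_one m key (T.map f) (by rw [Finset.card_map]; exact hT)
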